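/- Let g = h ⊕ ⊕_{α∈Δ} Cx_α be the Lie algebra sl₃ constructed from the A₂ root system with structure constants given by the cocycle ε (ε(α₁,α₂)=1, ε(α₂,α₁)=-1). Define ν̂ on g by ν̂(h) = ν(h) on the Cartan and ν̂(x_{α₁}) = i x_{α₂}, ν̂(x_{α₂}) = i x_{α₁}, ν̂(x_{α₁+α₂}) = x_{α₁+α₂}, ν̂(x_{-α₁}) = -i x_{-α₂}, ν̂(x_{-α₂}) = -i x_{-α₁}, ν̂(x_{-α₁-α₂}) = x_{-α₁-α₂}. Then ν̂⁴ = 1 but ν̂² ≠ 1 (indeed ν̂² = -1 on the root vectors x_{±α₁}, x_{±α₂}). -/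
import Mathlib


open Complex

/-- The automorphism ν̂ of g = sl₃ in coordinates with respect to the ordered basis
(α₁, α₂, x_{α₁}, x_{α₂}, x_{-α₁}, x_{-α₂}, x_{α₁+α₂}, x_{-α₁-α₂}). -/
noncomputable def nuHat (v : Fin 8 → ℂ) : Fin 8 → ℂ :=
  ![v 1, v 0, Complex.I * v 3, Complex.I * v 2,
    -Complex.I * v 5, -Complex.I * v 4, v 6, v 7]

/-- Standard basis vectors of g in coordinates. -/
noncomputable def gBasis (j : Fin 8) : Fin 8 → ℂ := Pi.single j 1


lemma vec8_val4 (a b c d e f g h : ℂ) : ![a,b,c,d,e,f,g,h] 4 = e := rfl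
lemma vec8_val5 (a b c d e f g h : ℂ) : ![a,b,c,d,e,f,g,h] 5 = f := rfl
lemma vec8_val6 (a b c d e f g h : ℂ) : ![a,b,c,d,e,f,g,h] 6 = g := rfl
lemma vec8_val7 (a b c d e f g h : ℂ) : ![a,b,c,d,e,f,g,h] 7 = h := rfl

lemma nuHat_sq (v : Fin 8 → ℂ) :
    nuHat (nuHat v) = ![v 0, v 1, -v 2, -v 3, -v 4, -v 5, v 6, v 7] := by
  funext i
  fin_cases i <;>
    simp [nuHat, vec8_val4, vec8_val5, vec8_val6, vec8_val7, Complex.I_sq] <;> ring_nf <;> simp [Complex.I_sq]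

theorem stmt11 :
    (nuHat ∘ nuHat ∘ nuHat ∘ nuHat) = id ∧
    (nuHat ∘ nuHat) ≠ id ∧
    nuHat (nuHat (gBasis 2)) = -(gBasis 2) ∧
    nuHat (nuHat (gBasis 3)) = -(gBasis 3) ∧
    nuHat (nuHat (gBasis 4)) = -(gBasis 4) ∧
    nuHat (nuHat (gBasis 5)) = -(gBasis 5) := by
  refine ⟨?_, ?_, ?_, ?_, ?_, ?_⟩
  · funext v i
    simp only [Function.comp_apply, nuHat_sq, id_eq]
    fin_cases i <;> simp [vec8_val4, vec8_val5, vec8_val6, vec8_val7]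
  · intro h
    have := congrFun (congrFun h (gBasis 2)) 2
    rw [Function.comp_apply, nuHat_sq] at this
    simp [gBasis, Pi.single] at this
    exact absurd this (by norm_num)
  all_goals
    rw [nuHat_sq]; funext i; fin_cases i <;> simp [gBasis, Pi.single, Function.update, vec8_val4, vec8_val5, vec8_val6, vec8_val7]
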